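/- Define R = {(0,0,1,0,1),(0,1,0,0,1),(1,0,0,0,1)} ⊆ {0,1}^5. Then every operation f : {0,1}^k → {0,1} that preserves R is a projection. -/

import Mathlib

/-- The relation `{(0,0,1,0,1),(0,1,0,0,1),(1,0,0,0,1)}`. -/
def R9 : Set (Fin 5 → Bool) :=
  {![false, false, true, false, true],
   ![false, true, false, false, true],
   ![true, false, false, false, true]}

/-- Every operation preserving `R9` is a projection. -/
theorem stmt_9 :
    ∀ (k : ℕ) (f : (Fin k → Bool) → Bool),
      (∀ t : Fin k → (Fin 5 → Bool), (∀ j, t j ∈ R9) →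
        (fun c : Fin 5 => f (fun j => t j c)) ∈ R9) →
      ∃ i : Fin k, ∀ x : Fin k → Bool, f x = x i := by
  intro k f h
  have key : ∀ u v : Fin k → Bool,
      f (fun _ => false) = false ∧ f (fun _ => true) = true ∧
      ((f u = false ∧ f (fun j => !u j && v j) = false ∧ f (fun j => !u j && !v j) = true) ∨
       (f u = false ∧ f (fun j => !u j && v j) = true ∧ f (fun j => !u j && !v j) = false) ∨
       (f u = true ∧ f (fun j => !u j && v j) = false ∧ f (fun j => !u j && !v j) = false)) := by
    intro u v
    set t : Fin k → Fin 5 → Bool := fun j =>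
      if u j then ![true, false, false, false, true]
      else if v j then ![false, true, false, false, true]
      else ![false, false, true, false, true] with ht
    have hmem : ∀ j, t j ∈ R9 := by
      intro j
      simp only [ht, R9, Set.mem_insert_iff, Set.mem_singleton_iff]
      by_cases h1 : u j <;> by_cases h2 : v j <;> simp [h1, h2]
    have hg := h t hmem
    have c0 : (fun j => t j 0) = u := by
      funext j; simp only [ht]
      by_cases h1 : u j <;> by_cases h2 : v j <;> simp [h1, h2]
    have c1 : (fun j => t j 1) = (fun j => !u j && v j) := by
      funext j; simp only [ht]
      by_cases h1 : u j <;> by_cases h2 : v j <;> simp [h1, h2]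
    have c2 : (fun j => t j 2) = (fun j => !u j && !v j) := by
      funext j; simp only [ht]
      by_cases h1 : u j <;> by_cases h2 : v j <;> simp [h1, h2]
    have c3 : (fun j => t j 3) = (fun _ => false) := by
      funext j; simp only [ht]
      by_cases h1 : u j <;> by_cases h2 : v j <;> simp [h1, h2]
    have c4 : (fun j => t j 4) = (fun _ => true) := by
      funext j; simp only [ht]
      by_cases h1 : u j <;> by_cases h2 : v j <;> simp [h1, h2]
    simp only [R9, Set.mem_insert_iff, Set.mem_singleton_iff] at hg
    rcases hg with hg | hg | hg <;>
    · have e0 := congrFun hg 0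
      have e1 := congrFun hg 1
      have e2 := congrFun hg 2
      have e3 := congrFun hg 3
      have e4 := congrFun hg 4
      rw [c0] at e0; rw [c1] at e1; rw [c2] at e2; rw [c3] at e3; rw [c4] at e4
      simp only [Matrix.cons_val_zero, Matrix.cons_val_one, Matrix.head_cons,
        Matrix.cons_val_fin_one, Matrix.cons_val_succ] at e0 e1 e2 e3 e4
      refine ⟨e3, e4, ?_⟩
      tauto
  have hF : f (fun _ => false) = false := (key (fun _ => false) (fun _ => false)).1
  have hT : f (fun _ => true) = true := (key (fun _ => false) (fun _ => false)).2.1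
  have compl : ∀ u : Fin k → Bool, f (fun j => !u j) = !f u := by
    intro u
    obtain ⟨_, _, hcase⟩ := key u (fun _ => false)
    simp only [Bool.and_false, Bool.not_false, Bool.and_true] at hcase
    rcases hcase with ⟨h1, h2, h3⟩ | ⟨h1, h2, h3⟩ | ⟨h1, h2, h3⟩ <;> simp_all
  have hexists : ∃ i : Fin k, f (fun j => decide (j = i)) = true := by
    by_contra hc
    push_neg at hc
    have step : ∀ n : ℕ, n ≤ k → f (fun j => decide (j.val < n)) = false := by
      intro n
      induction n with
      | zero => intro _; simpa using hF
      | succ n ih =>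
        intro hn
        have hn' : n < k := hn
        obtain ⟨_, _, hcase⟩ :=
          key (fun j => decide (j.val < n)) (fun j => decide (j = ⟨n, hn'⟩))
        have hv' : (fun j : Fin k => !decide (j.val < n) && decide (j = ⟨n, hn'⟩)) =
            (fun j => decide (j = ⟨n, hn'⟩)) := by
          funext j
          by_cases hj : j = ⟨n, hn'⟩
          · simp [hj]
          · simp [hj]
        have hw : (fun j : Fin k => !decide (j.val < n) && !decide (j = ⟨n, hn'⟩)) =
            (fun j => !decide (j.val < n + 1)) := by
          funext j
          by_cases h1 : j.val < n
          · simp [h1, Nat.lt_succ_of_lt h1]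
          · by_cases h2 : j = ⟨n, hn'⟩
            · simp [h1, h2]
            · have h3 : ¬ j.val < n + 1 := by
                have : j.val ≠ n := fun he => h2 (Fin.ext he)
                omega
              simp [h1, h2, h3]
        rw [hv', hw] at hcase
        have hu := ih (le_of_lt hn')
        have hv := hc ⟨n, hn'⟩
        have hcc := compl (fun j => decide (j.val < n + 1))
        rcases hcase with ⟨h1, h2, h3⟩ | ⟨h1, h2, h3⟩ | ⟨h1, h2, h3⟩ <;> simp_all
    have hfin := step k le_rfl
    have he : (fun j : Fin k => decide (j.val < k)) = (fun _ => true) := by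
      funext j; simp [j.isLt]
    rw [he] at hfin
    simp [hT] at hfin
  obtain ⟨i, hi⟩ := hexists
  refine ⟨i, fun x => ?_⟩
  cases hx : x i with
  | false =>
    obtain ⟨_, _, hcase⟩ := key (fun j => decide (j = i)) x
    have hv' : (fun j : Fin k => !decide (j = i) && x j) = x := by
      funext j
      by_cases hj : j = i
      · simp [hj, hx]
      · simp [hj]
    rw [hv'] at hcase
    rcases hcase with ⟨h1, h2, h3⟩ | ⟨h1, h2, h3⟩ | ⟨h1, h2, h3⟩ <;> simp_all
  | true =>
    obtain ⟨_, _, hcase⟩ := key (fun j => decide (j = i)) x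
    have hw : (fun j : Fin k => !decide (j = i) && !x j) = (fun j => !x j) := by
      funext j
      by_cases hj : j = i
      · simp [hj, hx]
      · simp [hj]
    rw [hw] at hcase
    have hcc := compl x
    rcases hcase with ⟨h1, h2, h3⟩ | ⟨h1, h2, h3⟩ | ⟨h1, h2, h3⟩ <;> simp_all
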